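/- Replacing the key of an internal BST node n (that has two nonempty children) by the key of its in-tree successor, and then deleting the successor node from the right subtree, yields a binary search tree whose key set equals the original key set with n's key removed. -/
import Mathlib


namespace PathCAS

inductive Tree (α : Type*) where
  | leaf : Tree α
  | node : Tree α → α → Tree α → Tree α

namespace Tree

variable {α : Type*} [LinearOrder α]

/-- The set of keys of a tree. -/
def Keys : Tree α → Set α
  | .leaf => ∅
  | .node l k r => Keys l ∪ {k} ∪ Keys r

/-- The binary-search-tree ordering invariant. -/
def IsBST : Tree α → Prop
  | .leaf => True
  | .node l k r => (∀ x ∈ Keys l, x < k) ∧ (∀ x ∈ Keys r, k < x) ∧ IsBST l ∧ IsBST r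

end Tree

end PathCAS

namespace PathCAS.Tree

variable {α : Type*} [LinearOrder α]

/-- The key of the leftmost node of a tree, if the tree is nonempty. -/
def leftmostKey : Tree α → Option α
  | .leaf => none
  | .node l k _ => some ((leftmostKey l).getD k)

/-- Delete the leftmost node of a tree (the leftmost node has no left child, so it is
replaced by its right subtree). -/
def delMin : Tree α → Tree α
  | .leaf => .leaf
  | .node .leaf _ r => r
  | .node (.node a b c) k r => .node (delMin (.node a b c)) k r

end PathCAS.Tree

open PathCAS PathCAS.Tree

namespace PathCAS.Tree

variable {α : Type*} [LinearOrder α]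

theorem lm_mem : ∀ {t : Tree α} {s : α}, leftmostKey t = some s → s ∈ Keys t := by
  intro t
  induction t with
  | leaf => intro s h; simp [leftmostKey] at h
  | node l k r ih =>
    intro s h
    simp only [leftmostKey, Option.some.injEq] at h
    cases hl : leftmostKey l with
    | none => rw [hl] at h; simp at h; subst h; exact Set.mem_union_left _ (Set.mem_union_right _ rfl)
    | some x =>
      rw [hl] at h; simp at h; subst h
      exact Set.mem_union_left _ (Set.mem_union_left _ (ih hl))

theorem lm_min : ∀ {t : Tree α} {s : α}, IsBST t → leftmostKey t = some s →
    ∀ x ∈ Keys t, s ≤ x := by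
  intro t
  induction t with
  | leaf => intro s _ h; simp [leftmostKey] at h
  | node l k r ih =>
    intro s hb h x hx
    obtain ⟨hlk, hkr, hbl, hbr⟩ := hb
    simp only [leftmostKey, Option.some.injEq] at h
    simp only [Keys, Set.mem_union, Set.mem_singleton_iff] at hx
    cases hl : leftmostKey l with
    | none =>
      rw [hl] at h; simp at h; subst h
      cases l with
      | leaf =>
        rcases hx with (hx | hx) | hx
        · simp [Keys] at hx
        · exact hx.ge
        · exact (hkr x hx).le
      | node a b c => simp [leftmostKey] at hl
    | some y =>
      rw [hl] at h; simp at h; subst h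
      have hyk : y < k := hlk y (lm_mem hl)
      rcases hx with (hx | hx) | hx
      · exact ih hbl hl x hx
      · subst hx; exact hyk.le
      · exact hyk.le.trans (hkr x hx).le

theorem delMin_spec : ∀ {t : Tree α} {s : α}, IsBST t → leftmostKey t = some s →
    IsBST (delMin t) ∧ Keys (delMin t) = Keys t \ {s} := by
  intro t
  induction t with
  | leaf => intro s _ h; simp [leftmostKey] at h
  | node l k r ih =>
    intro s hb h
    obtain ⟨hlk, hkr, hbl, hbr⟩ := hb
    simp only [leftmostKey, Option.some.injEq] at h
    cases l with
    | leaf =>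
      simp [leftmostKey] at h; subst h
      refine ⟨hbr, ?_⟩
      simp only [delMin, Keys]
      ext x
      simp only [Set.mem_union, Set.mem_diff, Set.mem_singleton_iff, Set.mem_empty_iff_false]
      constructor
      · intro hx; exact ⟨Or.inr hx, (hkr x hx).ne'⟩
      · rintro ⟨(h1 | h1) | h1, h2⟩
        · exact h1.elim
        · exact absurd h1 h2
        · exact h1
    | node a b c =>
      have hl : leftmostKey (Tree.node a b c) = some ((leftmostKey a).getD b) := rfl
      rw [hl] at h; simp at h
      obtain ⟨hbst', hkeys'⟩ := ih hbl (h ▸ hl)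
      have hsl : s ∈ Keys (Tree.node a b c) := lm_mem (h ▸ hl)
      have hsk : s < k := hlk s hsl
      have hsr : s ∉ Keys r := fun hx => absurd (hkr s hx) (not_lt.2 hsk.le)
      have heq : delMin (Tree.node (Tree.node a b c) k r) =
          Tree.node (delMin (Tree.node a b c)) k r := rfl
      rw [heq]
      constructor
      · exact ⟨fun x hx => hlk x (hkeys' ▸ hx).1, hkr, hbst', hbr⟩
      · show Keys (delMin (Tree.node a b c)) ∪ {k} ∪ Keys r =
          (Keys (Tree.node a b c) ∪ {k} ∪ Keys r) \ {s}
        rw [hkeys']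
        ext x
        simp only [Set.mem_union, Set.mem_diff, Set.mem_singleton_iff]
        constructor
        · rintro ((⟨h1, h2⟩ | h1) | h1)
          · exact ⟨Or.inl (Or.inl h1), h2⟩
          · exact ⟨Or.inl (Or.inr h1), h1 ▸ hsk.ne'⟩
          · exact ⟨Or.inr h1, fun hc => hsr (hc ▸ h1)⟩
        · rintro ⟨(h1 | h1) | h1, h2⟩
          · exact Or.inl (Or.inl ⟨h1, h2⟩)
          · exact Or.inl (Or.inr h1)
          · exact Or.inr h1

end PathCAS.Tree

/-- Two-child deletion: replacing the key of a node having two nonempty children by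
its in-tree successor (the minimum key of its right subtree) and deleting the
successor node from the right subtree yields a BST whose key set is the original key
set with the node's key removed. -/
theorem two_child_delete_correct {α : Type*} [LinearOrder α]
    (l r : PathCAS.Tree α) (k s : α)
    (hl : l ≠ .leaf) (hr : r ≠ .leaf)
    (hbst : (PathCAS.Tree.node l k r).IsBST)
    (hs : leftmostKey r = some s) :
    (PathCAS.Tree.node l s (delMin r)).IsBST ∧
    (PathCAS.Tree.node l s (delMin r)).Keys =
      (PathCAS.Tree.node l k r).Keys \ {k} := by
  obtain ⟨hlk, hkr, hbl, hbr⟩ := hbst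
  obtain ⟨hbd, hkd⟩ := delMin_spec hbr hs
  have hsmem : s ∈ r.Keys := lm_mem hs
  have hks : k < s := hkr s hsmem
  constructor
  · refine ⟨fun x hx => (hlk x hx).trans hks, fun x hx => ?_, hbl, hbd⟩
    rw [hkd] at hx
    exact lt_of_le_of_ne (lm_min hbr hs x hx.1) (Ne.symm hx.2)
  · show l.Keys ∪ {s} ∪ (delMin r).Keys = (l.Keys ∪ {k} ∪ r.Keys) \ {k}
    rw [hkd]
    ext x
    simp only [Set.mem_union, Set.mem_diff, Set.mem_singleton_iff]
    constructor
    · rintro ((h1 | h1) | h1)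
      · exact ⟨Or.inl (Or.inl h1), (hlk x h1).ne⟩
      · exact ⟨Or.inr (h1 ▸ hsmem), h1 ▸ hks.ne'⟩
      · exact ⟨Or.inr h1.1, (hkr x h1.1).ne'⟩
    · rintro ⟨(h1 | h1) | h1, h2⟩
      · exact Or.inl (Or.inl h1)
      · exact absurd h1 h2
      · by_cases hx : x = s
        · exact Or.inl (Or.inr hx)
        · exact Or.inr ⟨h1, hx⟩
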